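/- Let S_q(X|Z) := n·Ĥ(X|Z) + log(C_{|𝒳|·|𝒵|}^n / C_{|𝒵|}^n) be the qNML conditional stochastic complexity. Then SCI_q is symmetric: S_q(X|Z) − S_q(X|Z,Y) = S_q(Y|Z) − S_q(Y|Z,X), where Ĥ is the empirical conditional entropy computed from a sample of size n. -/
import Mathlib


/-- Multinomial normalized maximum likelihood (NML) regret `C_k^n`. -/
noncomputable def regret (k n : ℕ) : ℝ :=
  ∑ v ∈ Finset.Nat.antidiagonalTuple k n,
    ((n.factorial : ℝ) / ∏ j, ((v j).factorial : ℝ)) * ∏ j, ((v j : ℝ) / n) ^ (v j)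

/-- fNML regret `R_f(X | Z)` of a variable with domain size `k` given the observed
conditioning data `Z` on `n` samples: `∑_z log C_k^{n_z}`. -/
noncomputable def Rf (k : ℕ) {n : ℕ} {α : Type*} [Fintype α] [DecidableEq α]
    (Z : Fin n → α) : ℝ :=
  ∑ z : α, Real.log (regret k (Finset.univ.filter (fun i => Z i = z)).card)

/-- Empirical (plug-in) Shannon entropy of the sample `W`, in nats
(with the convention `0 · log 0 = 0`). -/
noncomputable def empEnt {n : ℕ} {α : Type*} [Fintype α] [DecidableEq α]
    (W : Fin n → α) : ℝ :=
  -∑ a : α, (((Finset.univ.filter (fun i => W i = a)).card : ℝ) / n) *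
      Real.log (((Finset.univ.filter (fun i => W i = a)).card : ℝ) / n)

/-- Empirical conditional entropy `Ĥ(X | Z) = Ĥ(X,Z) - Ĥ(Z)`. -/
noncomputable def empCondEnt {n : ℕ} {α β : Type*} [Fintype α] [DecidableEq α]
    [Fintype β] [DecidableEq β] (X : Fin n → α) (Z : Fin n → β) : ℝ :=
  empEnt (fun i => (X i, Z i)) - empEnt Z

/-- qNML conditional stochastic complexity `S_q` given domain sizes `kX` and `kZ`. -/
noncomputable def Sq {n : ℕ} {α β : Type*} [Fintype α] [DecidableEq α]
    [Fintype β] [DecidableEq β] (X : Fin n → α) (Z : Fin n → β)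
    (kX kZ : ℕ) : ℝ :=
  n * empCondEnt X Z + Real.log (regret (kX * kZ) n / regret kZ n)

lemma regret_zero (k : ℕ) : regret k 0 = 1 := by
  simp [regret, Finset.Nat.antidiagonalTuple_zero_right]

lemma regret_pos (k n : ℕ) (hk : 0 < k) : 0 < regret k n := by
  unfold regret
  have h0 : (fun j : Fin k => if j = ⟨0, hk⟩ then n else 0) ∈
      Finset.Nat.antidiagonalTuple k n := by
    rw [Finset.Nat.mem_antidiagonalTuple]
    simp
  refine Finset.sum_pos' (fun v _ => ?_) ⟨_, h0, ?_⟩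
  · have h1 : (0:ℝ) ≤ (n.factorial : ℝ) / ∏ j, ((v j).factorial : ℝ) := by positivity
    have h2 : (0:ℝ) ≤ ∏ j, ((v j : ℝ) / n) ^ (v j) := by positivity
    exact mul_nonneg h1 h2
  · have hfac : (∏ j : Fin k, (((if j = (⟨0, hk⟩ : Fin k) then n else 0).factorial : ℕ) : ℝ))
        = (n.factorial : ℝ) := by
      simp [apply_ite Nat.factorial, apply_ite (Nat.cast : ℕ → ℝ)]
    have hpow : (∏ j : Fin k, ((((if j = (⟨0, hk⟩ : Fin k) then n else 0) : ℕ) : ℝ) / n)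
        ^ ((if j = (⟨0, hk⟩ : Fin k) then n else 0) : ℕ)) = 1 := by
      rcases Nat.eq_zero_or_pos n with hn | hn
      · subst hn; simp
      · have : ((n:ℝ)/n) = 1 := div_self (by positivity)
        simp [apply_ite (fun m : ℕ => ((m:ℝ)/n) ^ m), this]
    simp only [hfac, hpow]
    rw [div_self (by positivity), one_mul]
    norm_num

lemma empEnt_comp {n : ℕ} {α β : Type*} [Fintype α] [DecidableEq α]
    [Fintype β] [DecidableEq β] (e : α → β) (he : Function.Injective e)
    (W : Fin n → α) : empEnt (fun i => e (W i)) = empEnt W := by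
  unfold empEnt
  congr 1
  have hvan : ∀ b ∈ (Finset.univ : Finset β), b ∉ Finset.univ.image e →
      (((Finset.univ.filter (fun i => e (W i) = b)).card : ℝ) / n) *
        Real.log (((Finset.univ.filter (fun i => e (W i) = b)).card : ℝ) / n) = 0 := by
    intro b _ hb
    have : (Finset.univ.filter (fun i => e (W i) = b)) = ∅ := by
      refine Finset.filter_eq_empty_iff.mpr fun i _ => ?_
      intro h
      exact hb (Finset.mem_image.mpr ⟨W i, Finset.mem_univ _, h⟩)
    simp [this]
  rw [← Finset.sum_subset (Finset.subset_univ (Finset.univ.image e)) hvan,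
    Finset.sum_image (fun x _ y _ h => he h)]
  refine Finset.sum_congr rfl fun a _ => ?_
  simp [he.eq_iff]

/-- Symmetry of `SCI_q`: `S_q(X|Z) − S_q(X|Z,Y) = S_q(Y|Z) − S_q(Y|Z,X)`. -/
theorem SCIq_symmetric {n : ℕ} {𝒳 𝒴 𝒵 : Type*}
    [Fintype 𝒳] [DecidableEq 𝒳] [Fintype 𝒴] [DecidableEq 𝒴]
    [Fintype 𝒵] [DecidableEq 𝒵]
    (X : Fin n → 𝒳) (Y : Fin n → 𝒴) (Z : Fin n → 𝒵) :
    Sq X Z (Fintype.card 𝒳) (Fintype.card 𝒵) -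
      Sq X (fun i => (Z i, Y i)) (Fintype.card 𝒳) (Fintype.card 𝒵 * Fintype.card 𝒴) =
    Sq Y Z (Fintype.card 𝒴) (Fintype.card 𝒵) -
      Sq Y (fun i => (Z i, X i)) (Fintype.card 𝒴) (Fintype.card 𝒵 * Fintype.card 𝒳) := by
  rcases Nat.eq_zero_or_pos n with hn | hn
  · subst hn
    simp [Sq, regret_zero]
  · have hX : 0 < Fintype.card 𝒳 := Fintype.card_pos_iff.mpr ⟨X ⟨0, hn⟩⟩
    have hY : 0 < Fintype.card 𝒴 := Fintype.card_pos_iff.mpr ⟨Y ⟨0, hn⟩⟩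
    have hZ : 0 < Fintype.card 𝒵 := Fintype.card_pos_iff.mpr ⟨Z ⟨0, hn⟩⟩
    set cX := Fintype.card 𝒳
    set cY := Fintype.card 𝒴
    set cZ := Fintype.card 𝒵
    -- entropy identities
    have h1 : empEnt (fun i => (X i, (Z i, Y i))) = empEnt (fun i => (Y i, (Z i, X i))) :=
      empEnt_comp (fun p : 𝒴 × (𝒵 × 𝒳) => (p.2.2, (p.2.1, p.1)))
        (fun a b h => by
          obtain ⟨a1, a2, a3⟩ := a; obtain ⟨b1, b2, b3⟩ := b
          simp_all [Prod.ext_iff]) (fun i => (Y i, (Z i, X i)))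
    have h2 : empEnt (fun i => (Z i, Y i)) = empEnt (fun i => (Y i, Z i)) :=
      empEnt_comp (fun p : 𝒴 × 𝒵 => (p.2, p.1))
        (fun a b h => by simp_all [Prod.ext_iff]) (fun i => (Y i, Z i))
    have h3 : empEnt (fun i => (Z i, X i)) = empEnt (fun i => (X i, Z i)) :=
      empEnt_comp (fun p : 𝒳 × 𝒵 => (p.2, p.1))
        (fun a b h => by simp_all [Prod.ext_iff]) (fun i => (X i, Z i))
    -- regret args
    have e1 : cX * (cZ * cY) = cX * cZ * cY := by ring
    have e2 : cY * (cZ * cX) = cX * cZ * cY := by ring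
    have e3 : cY * cZ = cZ * cY := by ring
    have e4 : cX * cZ = cZ * cX := by ring
    have pA : 0 < regret (cZ * cX) n := regret_pos _ _ (by positivity)
    have pB : 0 < regret cZ n := regret_pos _ _ hZ
    have pC : 0 < regret (cZ * cX * cY) n := regret_pos _ _ (by positivity)
    have pD : 0 < regret (cZ * cY) n := regret_pos _ _ (by positivity)
    simp only [Sq, empCondEnt, e1, e2, e3, e4]
    rw [Real.log_div pA.ne' pB.ne', Real.log_div pC.ne' pD.ne',
      Real.log_div pD.ne' pB.ne', Real.log_div pC.ne' pA.ne']
    rw [h1, h2, h3]; ring
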